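/- Lemma (Case 1 of the proof of the paper's Claim 3.5). Let r be an order with levels on X, let (τ₀, ω₀) be a persistence pair of r, let ε > 0, and let ω̃ be an n-simplex with ω̃ ∈ OV(r, ω₀) and ω̃ ∉ SV_ε(r, τ₀, ω₀). Let τ̃ ∈ X^(n−1) satisfy τ₀ ≺_r τ̃, r̂(τ₀) ≤ r̂(τ̃) < r̂(τ₀) + ε, ω̃ ∉ K_V(G(≻_r τ̃), ω₀), and ω̃ ∈ K_V(G(⪰_r τ̃), ω₀). Denote by ω_e the n-cell having τ₀ as a face that lies in K_V(G(≻_r τ₀), ω₀), by ω_e′ the other n-cell having τ₀ as a face, and by ω₁ the ≼_r-maximum n-cell of K_V(G(≻_r τ₀), ω_e′). Suppose there exists a path P from ω₀ to ω_e in G(≻_r τ₀) none of whose vertices lies in K_V(G(≻_r τ̃), ω̃). Set η := (r̂(τ̃) − r̂(τ₀) + ε)/4, let A ⊆ X^(n−1) be the union of the set of edges of P, the singleton {τ₀}, and the set of edges of the connected component of ω₁ in G(≻_r τ₀), and let q = q(r, η, A). Then q ∈ R_ε and ω̃ ∉ OV(q, ω₀). -/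

import Mathlib

open scoped Classical

namespace StableVol

/-- A finite abstract simplicial complex of dimension `n`: a finite family of nonempty
finite subsets of the vertex set, closed under nonempty subsets, in which every element
is contained in an element of cardinality `n+1`. -/
structure NComplex (V : Type*) [DecidableEq V] (n : ℕ) where
  X : Finset (Finset V)
  nonempty_mem : ∀ σ ∈ X, σ.Nonempty
  down_closed : ∀ σ ∈ X, ∀ σ' : Finset V, σ' ⊆ σ → σ'.Nonempty → σ' ∈ X
  contained_top : ∀ σ ∈ X, ∃ ω ∈ X, σ ⊆ ω ∧ ω.card = n + 1

variable {V : Type*} [DecidableEq V] {n : ℕ}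

/-- An `n`-cell is either an `n`-simplex (`some ω`) or the formal cell `ω∞` (`none`). -/
abbrev Cell (V : Type*) := Option (Finset V)

/-- `τ` is a face of the cell `c`.  For `c = some ω` this means that `ω` is an
`n`-simplex of `X` containing `τ`; the faces of `ω∞ = none` are the `(n-1)`-simplices
having exactly one `n`-simplex coface. -/
def faceCell (C : NComplex V n) (τ : Finset V) : Cell V → Prop
  | some ω => ω ∈ C.X ∧ ω.card = n + 1 ∧ τ ⊆ ω
  | none => {ω | ω ∈ C.X ∧ ω.card = n + 1 ∧ τ ⊆ ω}.ncard = 1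

def IsCell (C : NComplex V n) : Cell V → Prop
  | some ω => ω ∈ C.X ∧ ω.card = n + 1
  | none => True

/-- Adjacency in the dual graph, restricted to the edge set `E ⊆ X^(n-1)`. -/
def adj (C : NComplex V n) (E : Set (Finset V)) (c c' : Cell V) : Prop :=
  ∃ τ ∈ E, faceCell C τ c ∧ faceCell C τ c' ∧ c ≠ c'

/-- `KV C E c₀`: the set of `n`-cells in the connected component of `c₀` in the
subgraph of the dual graph with edge set `E`. -/
def KV (C : NComplex V n) (E : Set (Finset V)) (c₀ : Cell V) : Set (Cell V) :=
  {c | Relation.ReflTransGen (adj C E) c₀ c}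

/-- Every `(n-1)`-simplex of `X` is a face of exactly two `n`-cells. -/
def TwoCofaces (C : NComplex V n) : Prop :=
  ∀ τ ∈ C.X, τ.card = n →
    ∃ c₁ c₂ : Cell V, c₁ ≠ c₂ ∧ ∀ c : Cell V, faceCell C τ c ↔ (c = c₁ ∨ c = c₂)

/-- The dual graph (with full edge set `X^(n-1)`) is connected. -/
def DualConn (C : NComplex V n) : Prop :=
  ∀ c c' : Cell V, IsCell C c → IsCell C c' →
    c' ∈ KV C {τ | τ ∈ C.X ∧ τ.card = n} c

/-- A level function: monotone with respect to strict inclusion of simplices. -/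
def IsLevelFun (C : NComplex V n) (lev : Finset V → ℝ) : Prop :=
  ∀ σ ∈ C.X, ∀ σ' ∈ C.X, σ ⊂ σ' → lev σ ≤ lev σ'

/-- `(lev, slt)` is an order with levels on `X`: `lev` is a level function and `slt`
is (the strict form of) a linear order on `X` refining both `lev` and strict
inclusion. -/
def IsOWL (C : NComplex V n) (lev : Finset V → ℝ)
    (slt : Finset V → Finset V → Prop) : Prop :=
  IsLevelFun C lev ∧
  (∀ σ ∈ C.X, ¬ slt σ σ) ∧
  (∀ σ ∈ C.X, ∀ σ' ∈ C.X, ∀ σ'' ∈ C.X, slt σ σ' → slt σ' σ'' → slt σ σ'') ∧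
  (∀ σ ∈ C.X, ∀ σ' ∈ C.X, σ ≠ σ' → slt σ σ' ∨ slt σ' σ) ∧
  (∀ σ ∈ C.X, ∀ σ' ∈ C.X, slt σ σ' → lev σ ≤ lev σ') ∧
  (∀ σ ∈ C.X, ∀ σ' ∈ C.X, σ ⊂ σ' → slt σ σ')

/-- Extension of a strict order on simplices to `n`-cells, `ω∞ = none` being the
unique maximum. -/
def cslt (slt : Finset V → Finset V → Prop) : Cell V → Cell V → Prop
  | some σ, some σ' => slt σ σ'
  | some _, none => True
  | none, _ => False

/-- `m` is the maximum cell of the set `S` with respect to the order `slt`. -/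
def IsMaxCell (slt : Finset V → Finset V → Prop) (S : Set (Cell V)) (m : Cell V) :
    Prop :=
  m ∈ S ∧ ∀ c ∈ S, c ≠ m → cslt slt c m

/-- Edge set of `G(≻ σ₀)`: the `(n-1)`-simplices strictly above `σ₀`. -/
def Egt (C : NComplex V n) (slt : Finset V → Finset V → Prop) (σ₀ : Finset V) :
    Set (Finset V) :=
  {τ | τ ∈ C.X ∧ τ.card = n ∧ slt σ₀ τ}

/-- Edge set of `G(⪰ σ₀)`. -/
def Ege (C : NComplex V n) (slt : Finset V → Finset V → Prop) (σ₀ : Finset V) :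
    Set (Finset V) :=
  {τ | τ ∈ C.X ∧ τ.card = n ∧ (τ = σ₀ ∨ slt σ₀ τ)}

/-- Edge set of `G(lev ≥ s)`. -/
def Elev (C : NComplex V n) (lev : Finset V → ℝ) (s : ℝ) : Set (Finset V) :=
  {τ | τ ∈ C.X ∧ τ.card = n ∧ s ≤ lev τ}

/-- `(τ₀, ω₀)` is a persistence pair of the order `slt`: the two `n`-cells having
`τ₀` as a face lie in distinct connected components of `G(≻ τ₀)`, and `ω₀` is the
smaller of the two maximum cells of these two components. -/
def IsPersPair (C : NComplex V n) (slt : Finset V → Finset V → Prop)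
    (τ₀ ω₀ : Finset V) : Prop :=
  τ₀ ∈ C.X ∧ τ₀.card = n ∧ ω₀ ∈ C.X ∧ ω₀.card = n + 1 ∧
  ∃ c₁ c₂ : Cell V, c₁ ≠ c₂ ∧ faceCell C τ₀ c₁ ∧ faceCell C τ₀ c₂ ∧
    c₂ ∉ KV C (Egt C slt τ₀) c₁ ∧
    ∃ m₂ : Cell V,
      IsMaxCell slt (KV C (Egt C slt τ₀) c₁) (some ω₀) ∧
      IsMaxCell slt (KV C (Egt C slt τ₀) c₂) m₂ ∧
      cslt slt (some ω₀) m₂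

/-- The optimal volume `OV(q, ω₀) = K_V(G(≻_q τ_{q,ω₀}), ω₀)`. -/
def OV (C : NComplex V n) (slt : Finset V → Finset V → Prop) (ω₀ : Finset V) :
    Set (Cell V) :=
  {c | ∃ τ, IsPersPair C slt τ ω₀ ∧ c ∈ KV C (Egt C slt τ) (some ω₀)}

/-- The stable volume `SV_ε(r, τ₀, ω₀) = K_V(G(r̂ ≥ r̂(τ₀) + ε), ω₀)`. -/
def SV (C : NComplex V n) (lev : Finset V → ℝ) (τ₀ ω₀ : Finset V) (ε : ℝ) :
    Set (Cell V) :=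
  KV C (Elev C lev (lev τ₀ + ε)) (some ω₀)

/-- `(qlev, qslt) ∈ R_ε`: an order with levels uniformly `ε/2`-close to `rlev`
satisfying the `(r, ω₀)`-order condition. -/
def InR (C : NComplex V n) (rlev : Finset V → ℝ)
    (rslt : Finset V → Finset V → Prop) (ω₀ : Finset V) (ε : ℝ)
    (qlev : Finset V → ℝ) (qslt : Finset V → Finset V → Prop) : Prop :=
  IsOWL C qlev qslt ∧ (∀ σ ∈ C.X, |qlev σ - rlev σ| < ε / 2) ∧
  (∀ σ ∈ C.X, rslt σ ω₀ → qslt σ ω₀)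

/-- `F_{ε,n}`: the `n`-simplices with level at least `lev τ₀ + ε` that precede `ω₀`. -/
def Fcells (C : NComplex V n) (lev : Finset V → ℝ)
    (slt : Finset V → Finset V → Prop) (τ₀ ω₀ : Finset V) (ε : ℝ) :
    Set (Finset V) :=
  {σ | σ ∈ C.X ∧ σ.card = n + 1 ∧ lev τ₀ + ε ≤ lev σ ∧ slt σ ω₀}

/-- `F_{ε,n-1}`: the `(n-1)`-simplices with level at least `lev τ₀ + ε` that
precede `ω₀`. -/
def Fedges (C : NComplex V n) (lev : Finset V → ℝ)
    (slt : Finset V → Finset V → Prop) (τ₀ ω₀ : Finset V) (ε : ℝ) :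
    Set (Finset V) :=
  {σ | σ ∈ C.X ∧ σ.card = n ∧ lev τ₀ + ε ≤ lev σ ∧ slt σ ω₀}

/-- `τ*(∂z)`: the `ℤ/2ℤ`-sum of the coefficients of `z` over the `n`-simplex
cofaces of `τ`. -/
def bsum (C : NComplex V n) (τ : Finset V) (z : Finset V → ZMod 2) : ZMod 2 :=
  ∑ ω ∈ C.X.filter (fun ω => ω.card = n + 1 ∧ τ ⊆ ω), z ω

/-- A feasible chain `z = ω₀ + Σ_{ω ∈ F_{ε,n}} α_ω ω` with `τ*(∂z) = 0` for all
`τ ∈ F_{ε,n-1}`. -/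
def IsFeasible (C : NComplex V n) (lev : Finset V → ℝ)
    (slt : Finset V → Finset V → Prop) (τ₀ ω₀ : Finset V) (ε : ℝ)
    (z : Finset V → ZMod 2) : Prop :=
  z ω₀ = 1 ∧
  (∀ ω : Finset V, ω ≠ ω₀ → ω ∉ Fcells C lev slt τ₀ ω₀ ε → z ω = 0) ∧
  (∀ τ ∈ Fedges C lev slt τ₀ ω₀ ε, bsum C τ z = 0)

/-- `‖z‖₀`: the number of simplices of `X` with nonzero coefficient in `z`. -/
def norm0 (C : NComplex V n) (z : Finset V → ZMod 2) : ℕ :=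
  (C.X.filter fun ω => z ω ≠ 0).card

/-- The level function of the perturbed order `q(r, η, A)`. -/
noncomputable def pertLev (C : NComplex V n) (rlev : Finset V → ℝ) (η : ℝ)
    (A : Set (Finset V)) : Finset V → ℝ :=
  fun σ => if (σ ∈ C.X ∧ σ.card = n + 1) ∨ σ ∈ A then rlev σ + η else rlev σ - η

/-- The strict order of the perturbed order `q(r, η, A)`. -/
def pertSlt (C : NComplex V n) (rlev : Finset V → ℝ)
    (rslt : Finset V → Finset V → Prop) (η : ℝ) (A : Set (Finset V)) :
    Finset V → Finset V → Prop :=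
  fun σ σ' => pertLev C rlev η A σ < pertLev C rlev η A σ' ∨
    (pertLev C rlev η A σ = pertLev C rlev η A σ' ∧ rslt σ σ')

/-- The `(n-1)`-simplices that are edges of the connected component of `c₀` in the
subgraph with edge set `E`. -/
def compEdges (C : NComplex V n) (E : Set (Finset V)) (c₀ : Cell V) :
    Set (Finset V) :=
  {τ | τ ∈ E ∧ ∃ c, faceCell C τ c ∧ c ∈ KV C E c₀}

/-- `IsPath C E c c' vs es`: `vs` is the vertex list and `es` the edge list of a walk
from `c` to `c'` in the subgraph of the dual graph with edge set `E`. -/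
inductive IsPath (C : NComplex V n) (E : Set (Finset V)) :
    Cell V → Cell V → List (Cell V) → List (Finset V) → Prop
  | nil (c : Cell V) : IsPath C E c c [c] []
  | cons {c c' c'' : Cell V} {vs : List (Cell V)} {es : List (Finset V)}
      {τ : Finset V} : τ ∈ E → faceCell C τ c → faceCell C τ c' → c ≠ c' →
      IsPath C E c' c'' vs es → IsPath C E c c'' (c :: vs) (τ :: es)


section Helpers

variable {C : NComplex V n} {E E' : Set (Finset V)} {a b c c' : Cell V}

lemma adj_symm (h : adj C E c c') : adj C E c' c := by
  obtain ⟨τ, hτ, h1, h2, h3⟩ := h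
  exact ⟨τ, hτ, h2, h1, h3.symm⟩

lemma kv_of_rtg (h : Relation.ReflTransGen (adj C E) a c) : c ∈ KV C E a := h

lemma kv_refl : a ∈ KV C E a := Relation.ReflTransGen.refl

lemma kv_trans (h1 : b ∈ KV C E a) (h2 : c ∈ KV C E b) : c ∈ KV C E a :=
  Relation.ReflTransGen.trans h1 h2

lemma kv_tail (h1 : b ∈ KV C E a) (h2 : adj C E b c) : c ∈ KV C E a :=
  Relation.ReflTransGen.tail h1 h2

lemma kv_symm (h : c ∈ KV C E a) : a ∈ KV C E c := by
  have h' : Relation.ReflTransGen (adj C E) a c := h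
  clear h
  induction h' with
  | refl => exact kv_refl
  | tail h1 h2 ih => exact Relation.ReflTransGen.head (adj_symm h2) ih

lemma kv_mono (hEE : E ⊆ E') (h : c ∈ KV C E a) : c ∈ KV C E' a := by
  have h' : Relation.ReflTransGen (adj C E) a c := h
  clear h
  induction h' with
  | refl => exact kv_refl
  | tail h1 h2 ih =>
    obtain ⟨τ, hτ, hx, hy, hz⟩ := h2
    exact kv_tail ih ⟨τ, hEE hτ, hx, hy, hz⟩

lemma kv_simplex (h : c ∈ KV C E a)
    (hbase : ∀ σ : Finset V, a = some σ → σ ∈ C.X ∧ σ.card = n + 1) :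
    ∀ σ : Finset V, c = some σ → σ ∈ C.X ∧ σ.card = n + 1 := by
  have h' : Relation.ReflTransGen (adj C E) a c := h
  clear h
  induction h' with
  | refl => exact hbase
  | tail h1 h2 ih =>
    intro σ hσ
    obtain ⟨τ, hτ, hx, hy, hz⟩ := h2
    subst hσ
    have hy' : σ ∈ C.X ∧ σ.card = n + 1 ∧ τ ⊆ σ := hy
    exact ⟨hy'.1, hy'.2.1⟩

lemma isPath_start_mem {vs : List (Cell V)} {es : List (Finset V)}
    (h : IsPath C E a b vs es) : a ∈ vs := by
  cases h with
  | nil => exact List.mem_singleton_self _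
  | cons _ _ _ _ _ => exact List.mem_cons_self

lemma isPath_edges {vs : List (Cell V)} {es : List (Finset V)}
    (h : IsPath C E a b vs es) :
    ∀ τ ∈ es, τ ∈ E ∧ ∃ u v : Cell V, u ∈ vs ∧ v ∈ vs ∧ u ≠ v ∧
      faceCell C τ u ∧ faceCell C τ v := by
  induction h with
  | nil => intro τ hτ; simp at hτ
  | cons hτ hf hf' hne hrest ih =>
    intro τ' hτ'
    rcases List.mem_cons.mp hτ' with rfl | hmem
    · exact ⟨hτ, _, _, List.mem_cons_self,
        List.mem_cons_of_mem _ (isPath_start_mem hrest), hne, hf, hf'⟩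
    · obtain ⟨h1, u, v, hu, hv, huv, h2, h3⟩ := ih τ' hmem
      exact ⟨h1, u, v, List.mem_cons_of_mem _ hu, List.mem_cons_of_mem _ hv, huv, h2, h3⟩

lemma isPath_rtg {vs : List (Cell V)} {es : List (Finset V)}
    (h : IsPath C E a b vs es)
    (hsub : ∀ τ ∈ es, τ ∈ E') : Relation.ReflTransGen (adj C E') a b := by
  induction h with
  | nil => exact Relation.ReflTransGen.refl
  | cons hτ hf hf' hne hrest ih =>
    exact Relation.ReflTransGen.head
      ⟨_, hsub _ (List.mem_cons_self), hf, hf', hne⟩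
      (ih fun τ hτ' => hsub τ (List.mem_cons_of_mem _ hτ'))

lemma coface_eq (htwo : TwoCofaces C) {τ : Finset V}
    (hX : τ ∈ C.X) (hc : τ.card = n) {u v w : Cell V} (huv : u ≠ v)
    (hu : faceCell C τ u) (hv : faceCell C τ v) (hw : faceCell C τ w) :
    w = u ∨ w = v := by
  obtain ⟨d₁, d₂, hd, hiff⟩ := htwo τ hX hc
  rcases (hiff u).mp hu with h1 | h1 <;> rcases (hiff v).mp hv with h2 | h2 <;>
    rcases (hiff w).mp hw with h3 | h3 <;> simp_all

lemma persPair_lt_false {lev : Finset V → ℝ} {slt : Finset V → Finset V → Prop}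
    (h : IsOWL C lev slt) {τ τ' ω₀ : Finset V}
    (h1 : IsPersPair C slt τ ω₀) (h2 : IsPersPair C slt τ' ω₀)
    (hlt : slt τ τ') : False := by
  obtain ⟨-, hirr, htr, -, -, -⟩ := h
  obtain ⟨hτX, hτc, hωX, hωc, c₁, c₂, hc, hf1, hf2, hsep, m₂, hm1, hm2, hm12⟩ := h1
  obtain ⟨hτ'X, hτ'c, -, -, d₁, d₂, hd, hg1, hg2, hdsep, m₂', hn1, hn2, hn12⟩ := h2
  have hEsub : Egt C slt τ' ⊆ Egt C slt τ := by
    intro σ hσ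
    obtain ⟨hσ1, hσ2, hσ3⟩ := hσ
    exact ⟨hσ1, hσ2, htr τ hτX τ' hτ'X σ hσ1 hlt hσ3⟩
  have hτ'E : τ' ∈ Egt C slt τ := ⟨hτ'X, hτ'c, hlt⟩
  have h01 : (some ω₀ : Cell V) ∈ KV C (Egt C slt τ) d₁ := kv_mono hEsub hn1.1
  have h2' : m₂' ∈ KV C (Egt C slt τ) d₁ :=
    kv_of_rtg (Relation.ReflTransGen.head ⟨τ', hτ'E, hg1, hg2, hd⟩
      (kv_mono hEsub hn2.1))
  have h4 : m₂' ∈ KV C (Egt C slt τ) c₁ :=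
    kv_trans hm1.1 (kv_trans (kv_symm h01) h2')
  have hne : m₂' ≠ some ω₀ := by
    rintro rfl
    exact hirr ω₀ hωX hn12
  have h5 : cslt slt m₂' (some ω₀) := hm1.2 m₂' h4 hne
  have hbase : ∀ σ : Finset V, d₂ = some σ → σ ∈ C.X ∧ σ.card = n + 1 := by
    intro σ hσ
    rw [hσ] at hg2
    have hg2' : σ ∈ C.X ∧ σ.card = n + 1 ∧ τ' ⊆ σ := hg2
    exact ⟨hg2'.1, hg2'.2.1⟩
  cases m₂' with
  | none => exact h5
  | some σ =>
    have hσX := kv_simplex hn2.1 hbase σ rfl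
    have ha : slt ω₀ σ := hn12
    have hb : slt σ ω₀ := h5
    exact hirr ω₀ hωX (htr ω₀ hωX σ hσX.1 ω₀ hωX ha hb)

lemma persPair_unique {lev : Finset V → ℝ} {slt : Finset V → Finset V → Prop}
    (h : IsOWL C lev slt) {τ τ' ω₀ : Finset V}
    (h1 : IsPersPair C slt τ ω₀) (h2 : IsPersPair C slt τ' ω₀) : τ = τ' := by
  by_contra hne
  rcases h.2.2.2.1 τ h1.1 τ' h2.1 hne with hlt | hlt
  · exact persPair_lt_false h h1 h2 hlt
  · exact persPair_lt_false h h2 h1 hlt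

end Helpers

/-- Case 1 of the proof of Claim 3.5: if there is a path `P` from
`ω₀` to `ω_e` in `G(≻_r τ₀)` avoiding `K_V(G(≻_r τ̃), ω̃)`, then the perturbed
order `q = q(r, η, A)` lies in `R_ε` and its optimal volume avoids `ω̃`. -/
theorem case_one_of_claim
    (hn : 2 ≤ n) (C : NComplex V n) (htwo : TwoCofaces C) (hconn : DualConn C)
    (rlev : Finset V → ℝ) (rslt : Finset V → Finset V → Prop)
    (hr : IsOWL C rlev rslt)
    (τ₀ ω₀ : Finset V) (hpair : IsPersPair C rslt τ₀ ω₀)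
    (ε : ℝ) (hε : 0 < ε)
    (ωt : Finset V) (hωtX : ωt ∈ C.X) (hωtc : ωt.card = n + 1)
    (hOV : (some ωt : Cell V) ∈ OV C rslt ω₀)
    (hSV : (some ωt : Cell V) ∉ SV C rlev τ₀ ω₀ ε)
    (τt : Finset V) (hτtX : τt ∈ C.X) (hτtc : τt.card = n)
    (hτt₁ : rslt τ₀ τt) (hτt₂ : rlev τ₀ ≤ rlev τt) (hτt₃ : rlev τt < rlev τ₀ + ε)
    (hτt₄ : (some ωt : Cell V) ∉ KV C (Egt C rslt τt) (some ω₀))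
    (hτt₅ : (some ωt : Cell V) ∈ KV C (Ege C rslt τt) (some ω₀))
    (ωe ωe' : Cell V) (hfe : faceCell C τ₀ ωe) (hfe' : faceCell C τ₀ ωe')
    (hee : ωe ≠ ωe') (hin : ωe ∈ KV C (Egt C rslt τ₀) (some ω₀))
    (ω₁ : Cell V) (hω₁ : IsMaxCell rslt (KV C (Egt C rslt τ₀) ωe') ω₁)
    (vs : List (Cell V)) (es : List (Finset V))
    (hP : IsPath C (Egt C rslt τ₀) (some ω₀) ωe vs es) (hnd : vs.Nodup)
    (havoid : ∀ c ∈ vs, c ∉ KV C (Egt C rslt τt) (some ωt)) :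
    ∀ η : ℝ, η = (rlev τt - rlev τ₀ + ε) / 4 →
      ∀ A : Set (Finset V),
        A = {τ | τ ∈ es} ∪ {τ₀} ∪ compEdges C (Egt C rslt τ₀) ω₁ →
        InR C rlev rslt ω₀ ε (pertLev C rlev η A) (pertSlt C rlev rslt η A) ∧
        (some ωt : Cell V) ∉ OV C (pertSlt C rlev rslt η A) ω₀ := by
  obtain ⟨hrlev, hrirr, hrtr, hrtot, hrcomp, hrsub⟩ := id hr
  obtain ⟨hτ₀X, hτ₀c, hω₀X, hω₀c, c₁, c₂, hc12, hf1, hf2, hsep, m₂, hmax1, hmax2, hlt12⟩ :=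
    id hpair
  intro η hη A hA
  -- basic numeric facts
  have hη0 : 0 < η := by rw [hη]; linarith
  have hηε : η < ε / 2 := by rw [hη]; linarith
  have h2η : rlev τt < rlev τ₀ + 2 * η := by rw [hη]; linarith
  -- cards
  have hcard_le : ∀ σ ∈ C.X, σ.card ≤ n + 1 := by
    intro σ hσ
    obtain ⟨ω, hω, hsub', hc⟩ := C.contained_top σ hσ
    exact hc ▸ Finset.card_le_card hsub'
  have hτ₀Er : τ₀ ∉ Egt C rslt τ₀ := by
    rintro ⟨-, -, h⟩
    exact hrirr τ₀ hτ₀X h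
  have hτne₀ : ∀ τ ∈ Egt C rslt τ₀, τ ≠ τ₀ := by
    intro τ hτ hne
    rw [hne] at hτ
    exact hτ₀Er hτ
  have hA_struct : ∀ τ ∈ A, τ ∈ C.X ∧ τ.card = n ∧ (τ = τ₀ ∨ rslt τ₀ τ) := by
    intro τ hτ
    rw [hA] at hτ
    rcases hτ with (hτ | hτ) | hτ
    · obtain ⟨⟨hE1, hE2, hE3⟩, -⟩ := isPath_edges hP τ hτ
      exact ⟨hE1, hE2, Or.inr hE3⟩
    · rw [Set.mem_singleton_iff] at hτ
      subst hτ
      exact ⟨hτ₀X, hτ₀c, Or.inl rfl⟩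
    · obtain ⟨⟨hE1, hE2, hE3⟩, -⟩ := hτ
      exact ⟨hE1, hE2, Or.inr hE3⟩
  -- level computations
  have hqtop : ∀ σ ∈ C.X, σ.card = n + 1 → pertLev C rlev η A σ = rlev σ + η := by
    intro σ h1 h2
    simp only [pertLev]
    rw [if_pos (Or.inl ⟨h1, h2⟩)]
  have hqA : ∀ σ ∈ A, pertLev C rlev η A σ = rlev σ + η := by
    intro σ h1
    simp only [pertLev]
    rw [if_pos (Or.inr h1)]
  have hqlow : ∀ σ : Finset V, σ ∉ A → σ.card ≠ n + 1 →
      pertLev C rlev η A σ = rlev σ - η := by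
    intro σ h1 h2
    simp only [pertLev]
    rw [if_neg]
    rintro (⟨-, h⟩ | h)
    · exact h2 h
    · exact h1 h
  have hτ₀A : τ₀ ∈ A := by
    rw [hA]
    exact Or.inl (Or.inr rfl)
  have hqτ₀ : pertLev C rlev η A τ₀ = rlev τ₀ + η := hqA τ₀ hτ₀A
  have hbound : ∀ σ : Finset V,
      rlev σ - η ≤ pertLev C rlev η A σ ∧ pertLev C rlev η A σ ≤ rlev σ + η := by
    intro σ
    simp only [pertLev]
    split <;> constructor <;> linarith
  have hqlevfun : IsLevelFun C (pertLev C rlev η A) := by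
    intro σ hσ σ' hσ' hss
    have hle : rlev σ ≤ rlev σ' := hrlev σ hσ σ' hσ' hss
    have hcards : σ.card < σ'.card := Finset.card_lt_card hss
    by_cases h' : σ'.card = n + 1
    · rw [hqtop σ' hσ' h']
      have := (hbound σ).2
      linarith
    · by_cases hA' : σ' ∈ A
      · rw [hqA σ' hA']
        have := (hbound σ).2
        linarith
      · rw [hqlow σ' hA' h']
        have hσc : σ'.card ≤ n := by
          have := hcard_le σ' hσ'
          omega
        have hσlow : pertLev C rlev η A σ = rlev σ - η := by
          apply hqlow
          · intro hA''
            have := (hA_struct σ hA'').2.1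
            omega
          · intro hc'
            omega
        rw [hσlow]
        linarith
  have hqOWL : IsOWL C (pertLev C rlev η A) (pertSlt C rlev rslt η A) := by
    refine ⟨hqlevfun, ?_, ?_, ?_, ?_, ?_⟩
    · rintro σ hσ (h | ⟨-, h⟩)
      · exact lt_irrefl _ h
      · exact hrirr σ hσ h
    · rintro σ hσ σ' hσ' σ'' hσ'' (h1 | ⟨e1, h1⟩) (h2 | ⟨e2, h2⟩)
      · exact Or.inl (h1.trans h2)
      · exact Or.inl (h1.trans_eq e2)
      · exact Or.inl (e1.trans_lt h2)
      · exact Or.inr ⟨e1.trans e2, hrtr σ hσ σ' hσ' σ'' hσ'' h1 h2⟩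
    · intro σ hσ σ' hσ' hne
      rcases lt_trichotomy (pertLev C rlev η A σ) (pertLev C rlev η A σ') with h | h | h
      · exact Or.inl (Or.inl h)
      · rcases hrtot σ hσ σ' hσ' hne with h' | h'
        · exact Or.inl (Or.inr ⟨h, h'⟩)
        · exact Or.inr (Or.inr ⟨h.symm, h'⟩)
      · exact Or.inr (Or.inl h)
    · rintro σ hσ σ' hσ' (h | ⟨h, -⟩)
      · exact h.le
      · exact h.le
    · intro σ hσ σ' hσ' hss
      rcases lt_or_eq_of_le (hqlevfun σ hσ σ' hσ' hss) with h | h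
      · exact Or.inl h
      · exact Or.inr ⟨h, hrsub σ hσ σ' hσ' hss⟩
  -- identify the components of τ₀ under r
  have hω₀c₁ : (some ω₀ : Cell V) ∈ KV C (Egt C rslt τ₀) c₁ := hmax1.1
  have hωec₁ : ωe ∈ KV C (Egt C rslt τ₀) c₁ := kv_trans hω₀c₁ hin
  have hdisj : ∀ d : Cell V, d ∈ KV C (Egt C rslt τ₀) c₁ →
      d ∈ KV C (Egt C rslt τ₀) c₂ → False :=
    fun d h1 h2 => hsep (kv_trans h1 (kv_symm h2))
  have hωe1 : ωe = c₁ := by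
    rcases coface_eq htwo hτ₀X hτ₀c hc12 hf1 hf2 hfe with h | h
    · exact h
    · exact absurd (hdisj ωe hωec₁ (by rw [h]; exact kv_refl)) not_false
  have hωe2 : ωe' = c₂ := by
    rcases coface_eq htwo hτ₀X hτ₀c hc12 hf1 hf2 hfe' with h | h
    · exact absurd (hωe1.trans h.symm) hee
    · exact h
  rw [← hωe1] at hsep hmax1
  rw [← hωe2] at hsep hmax2
  have hbase : ∀ σ : Finset V, ωe = some σ → σ ∈ C.X ∧ σ.card = n + 1 := by
    intro σ h
    rw [h] at hfe
    have h' : σ ∈ C.X ∧ σ.card = n + 1 ∧ τ₀ ⊆ σ := hfe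
    exact ⟨h'.1, h'.2.1⟩
  have hbase' : ∀ σ : Finset V, ωe' = some σ → σ ∈ C.X ∧ σ.card = n + 1 := by
    intro σ h
    rw [h] at hfe'
    have h' : σ ∈ C.X ∧ σ.card = n + 1 ∧ τ₀ ⊆ σ := hfe'
    exact ⟨h'.1, h'.2.1⟩
  have hω₁m₂ : ω₁ = m₂ := by
    by_contra hne
    have h1 : cslt rslt m₂ ω₁ := hω₁.2 m₂ hmax2.1 (Ne.symm hne)
    have h2 : cslt rslt ω₁ m₂ := hmax2.2 ω₁ hω₁.1 hne
    cases hw : ω₁ with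
    | none =>
      cases hm : m₂ with
      | none => exact hne (hw.trans hm.symm)
      | some σ => rw [hw, hm] at h2; exact h2
    | some σ₁ =>
      cases hm : m₂ with
      | none => rw [hw, hm] at h1; exact h1
      | some σ₂ =>
        rw [hw, hm] at h1 h2
        have hX₁ := kv_simplex hω₁.1 hbase' σ₁ hw
        have hX₂ := kv_simplex hmax2.1 hbase' σ₂ hm
        have ha : rslt σ₁ σ₂ := h2
        have hb : rslt σ₂ σ₁ := h1
        exact hrirr σ₁ hX₁.1 (hrtr σ₁ hX₁.1 σ₂ hX₂.1 σ₁ hX₁.1 ha hb)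
  rw [← hω₁m₂] at hmax2 hlt12
  -- edge set facts for q
  have hAinEq : ∀ τ ∈ A, τ ≠ τ₀ → τ ∈ Egt C (pertSlt C rlev rslt η A) τ₀ := by
    intro τ hτ hne
    obtain ⟨hX, hc, hor⟩ := hA_struct τ hτ
    have hgt : rslt τ₀ τ := hor.resolve_left hne
    refine ⟨hX, hc, ?_⟩
    have h1 : rlev τ₀ ≤ rlev τ := hrcomp τ₀ hτ₀X τ hX hgt
    have e1 : pertLev C rlev η A τ = rlev τ + η := hqA τ hτ
    rcases lt_or_eq_of_le h1 with h | h
    · exact Or.inl (by rw [hqτ₀, e1]; linarith)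
    · exact Or.inr ⟨by rw [hqτ₀, e1, h], hgt⟩
  have hEq_sub : ∀ τ ∈ Egt C (pertSlt C rlev rslt η A) τ₀,
      τ ∈ Egt C rslt τ₀ ∧ (τ ∈ A ∨ τ ∈ Egt C rslt τt) := by
    rintro τ ⟨hX, hc, hq⟩
    by_cases hτA : τ ∈ A
    · have hgt : rslt τ₀ τ := by
        rcases (hA_struct τ hτA).2.2 with h | h
        · exfalso
          rw [h] at hq
          rcases hq with h' | ⟨-, h'⟩
          · exact lt_irrefl _ h'
          · exact hrirr τ₀ hτ₀X h'
        · exact h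
      exact ⟨⟨hX, hc, hgt⟩, Or.inl hτA⟩
    · have e1 : pertLev C rlev η A τ = rlev τ - η := hqlow τ hτA (by rw [hc]; omega)
      have h2 : rlev τ₀ + 2 * η ≤ rlev τ := by
        rcases hq with h | ⟨h, -⟩
        · rw [hqτ₀, e1] at h; linarith
        · rw [hqτ₀, e1] at h; linarith
      have hneq : τ₀ ≠ τ := by
        intro h
        rw [← h] at h2
        linarith
      have hgt0 : rslt τ₀ τ := by
        rcases hrtot τ₀ hτ₀X τ hX hneq with h | h
        · exact h
        · exact absurd (hrcomp τ hX τ₀ hτ₀X h) (by linarith)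
      have hneqt : τt ≠ τ := by
        intro h
        rw [← h] at h2
        linarith
      have hgtt : rslt τt τ := by
        rcases hrtot τt hτtX τ hX hneqt with h | h
        · exact h
        · exact absurd (hrcomp τ hX τt hτtX h) (by linarith)
      exact ⟨⟨hX, hc, hgt0⟩, Or.inr ⟨hX, hc, hgtt⟩⟩
  have hEqEr : Egt C (pertSlt C rlev rslt η A) τ₀ ⊆ Egt C rslt τ₀ :=
    fun τ h => (hEq_sub τ h).1
  -- component of ωe' is preserved in q
  have hcompsub : ∀ c : Cell V, c ∈ KV C (Egt C rslt τ₀) ωe' →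
      c ∈ KV C (Egt C (pertSlt C rlev rslt η A) τ₀) ωe' := by
    intro c hc
    have hc' : Relation.ReflTransGen (adj C (Egt C rslt τ₀)) ωe' c := hc
    clear hc
    induction hc' with
    | refl => exact kv_refl
    | tail h1 h2 ih =>
      rename_i b cc
      obtain ⟨τ, hτE, hfb, hfc, hne⟩ := h2
      have hb1 : b ∈ KV C (Egt C rslt τ₀) ω₁ := kv_trans (kv_symm hω₁.1) h1
      have hτA : τ ∈ A := by
        rw [hA]
        exact Or.inr ⟨hτE, b, hfb, hb1⟩
      exact kv_tail ih ⟨τ, hAinEq τ hτA (hτne₀ τ hτE), hfb, hfc, hne⟩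
  -- the q-pair of ω₀ is (τ₀, ω₀)
  have hesEq : ∀ τ ∈ es, τ ∈ Egt C (pertSlt C rlev rslt η A) τ₀ := by
    intro τ hτ
    have hE := (isPath_edges hP τ hτ).1
    exact hAinEq τ (by rw [hA]; exact Or.inl (Or.inl hτ)) (hτne₀ τ hE)
  have hω₀ωe : (some ω₀ : Cell V) ∈ KV C (Egt C (pertSlt C rlev rslt η A) τ₀) ωe :=
    kv_symm (kv_of_rtg (isPath_rtg hP hesEq))
  have hsepq : ωe' ∉ KV C (Egt C (pertSlt C rlev rslt η A) τ₀) ωe :=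
    fun h => hsep (kv_mono hEqEr h)
  have hmaxq1 : IsMaxCell (pertSlt C rlev rslt η A)
      (KV C (Egt C (pertSlt C rlev rslt η A) τ₀) ωe) (some ω₀) := by
    refine ⟨hω₀ωe, ?_⟩
    intro c hc hne
    have hcEr : c ∈ KV C (Egt C rslt τ₀) ωe := kv_mono hEqEr hc
    have h5 : cslt rslt c (some ω₀) := hmax1.2 c hcEr hne
    cases c with
    | none => exact False.elim h5
    | some σ =>
      have hσX := kv_simplex hcEr hbase σ rfl
      have h6 : rslt σ ω₀ := h5
      have h7 : rlev σ ≤ rlev ω₀ := hrcomp σ hσX.1 ω₀ hω₀X h6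
      show pertSlt C rlev rslt η A σ ω₀
      have e1 : pertLev C rlev η A σ = rlev σ + η := hqtop σ hσX.1 hσX.2
      have e2 : pertLev C rlev η A ω₀ = rlev ω₀ + η := hqtop ω₀ hω₀X hω₀c
      rcases lt_or_eq_of_le h7 with h | h
      · exact Or.inl (by rw [e1, e2]; linarith)
      · exact Or.inr ⟨by rw [e1, e2, h], h6⟩
  have hω₁K : ω₁ ∈ KV C (Egt C (pertSlt C rlev rslt η A) τ₀) ωe' := hcompsub ω₁ hω₁.1
  have hmaxq2 : IsMaxCell (pertSlt C rlev rslt η A)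
      (KV C (Egt C (pertSlt C rlev rslt η A) τ₀) ωe') ω₁ := by
    refine ⟨hω₁K, ?_⟩
    intro c hc hne
    have hcEr : c ∈ KV C (Egt C rslt τ₀) ωe' := kv_mono hEqEr hc
    have h5 : cslt rslt c ω₁ := hω₁.2 c hcEr hne
    cases hw : ω₁ with
    | none =>
      cases c with
      | none => exact absurd hw.symm hne
      | some σ => exact trivial
    | some σ₁ =>
      rw [hw] at h5
      cases c with
      | none => exact False.elim h5
      | some σ =>
        have hσX := kv_simplex hcEr hbase' σ rfl
        have hσ₁X := kv_simplex hω₁.1 hbase' σ₁ hw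
        have h6 : rslt σ σ₁ := h5
        have h7 : rlev σ ≤ rlev σ₁ := hrcomp σ hσX.1 σ₁ hσ₁X.1 h6
        show pertSlt C rlev rslt η A σ σ₁
        have e1 : pertLev C rlev η A σ = rlev σ + η := hqtop σ hσX.1 hσX.2
        have e2 : pertLev C rlev η A σ₁ = rlev σ₁ + η := hqtop σ₁ hσ₁X.1 hσ₁X.2
        rcases lt_or_eq_of_le h7 with h | h
        · exact Or.inl (by rw [e1, e2]; linarith)
        · exact Or.inr ⟨by rw [e1, e2, h], h6⟩
  have hltq : cslt (pertSlt C rlev rslt η A) (some ω₀ : Cell V) ω₁ := by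
    cases hw : ω₁ with
    | none => exact trivial
    | some σ₁ =>
      rw [hw] at hlt12
      have hσ₁X := kv_simplex hω₁.1 hbase' σ₁ hw
      have h6 : rslt ω₀ σ₁ := hlt12
      have h7 : rlev ω₀ ≤ rlev σ₁ := hrcomp ω₀ hω₀X σ₁ hσ₁X.1 h6
      show pertSlt C rlev rslt η A ω₀ σ₁
      have e1 : pertLev C rlev η A ω₀ = rlev ω₀ + η := hqtop ω₀ hω₀X hω₀c
      have e2 : pertLev C rlev η A σ₁ = rlev σ₁ + η := hqtop σ₁ hσ₁X.1 hσ₁X.2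
      rcases lt_or_eq_of_le h7 with h | h
      · exact Or.inl (by rw [e1, e2]; linarith)
      · exact Or.inr ⟨by rw [e1, e2, h], h6⟩
  have hqpair : IsPersPair C (pertSlt C rlev rslt η A) τ₀ ω₀ :=
    ⟨hτ₀X, hτ₀c, hω₀X, hω₀c, ωe, ωe', hee, hfe, hfe', hsepq, ω₁, hmaxq1, hmaxq2, hltq⟩
  -- ωt lies in the r-component of ω₀
  have hωtEr : (some ωt : Cell V) ∈ KV C (Egt C rslt τ₀) (some ω₀) := by
    obtain ⟨τ', hpp', hkv'⟩ := hOV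
    rw [persPair_unique hr hpp' hpair] at hkv'
    exact hkv'
  -- the invariant
  have hinv : ∀ c : Cell V, c ∈ KV C (Egt C (pertSlt C rlev rslt η A) τ₀) (some ωt) →
      c ∈ KV C (Egt C rslt τt) (some ωt) ∧ c ∈ KV C (Egt C rslt τ₀) (some ω₀) := by
    intro c hc
    have hc' : Relation.ReflTransGen (adj C (Egt C (pertSlt C rlev rslt η A) τ₀))
      (some ωt) c := hc
    clear hc
    induction hc' with
    | refl => exact ⟨kv_refl, hωtEr⟩
    | tail h1 h2 ih =>
      rename_i b cc
      obtain ⟨hIt, hIr⟩ := ih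
      obtain ⟨τ, hτEQ, hfb, hfc, hne⟩ := h2
      obtain ⟨hτEr, hAt⟩ := hEq_sub τ hτEQ
      refine ⟨?_, kv_tail hIr ⟨τ, hτEr, hfb, hfc, hne⟩⟩
      by_cases hτA : τ ∈ A
      · exfalso
        have hAcases : τ ∈ {τ | τ ∈ es} ∪ {τ₀} ∪ compEdges C (Egt C rslt τ₀) ω₁ := by
          rw [← hA]; exact hτA
        obtain ⟨hτX', hτc', -⟩ := id hτEr
        rcases hAcases with (hes | h0) | hcomp
        · obtain ⟨-, u, v, hu, hv, huv, hfu, hfv⟩ := isPath_edges hP τ hes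
          rcases coface_eq htwo hτX' hτc' huv hfu hfv hfb with h | h
          · exact havoid b (by rw [h]; exact hu) hIt
          · exact havoid b (by rw [h]; exact hv) hIt
        · have h0' : τ = τ₀ := h0
          exact hτne₀ τ hτEr h0'
        · obtain ⟨hτE2, d, hfd, hdK⟩ := hcomp
          have hbK : b ∈ KV C (Egt C rslt τ₀) ω₁ := by
            by_cases hbd : d = b
            · rw [← hbd]; exact hdK
            · exact kv_tail hdK ⟨τ, hτE2, hfd, hfb, hbd⟩
          have hbωe' : b ∈ KV C (Egt C rslt τ₀) ωe' := kv_trans hω₁.1 hbK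
          exact hsep (kv_trans hmax1.1 (kv_trans hIr (kv_symm hbωe')))
      · have hτEt : τ ∈ Egt C rslt τt := hAt.resolve_left hτA
        exact kv_tail hIt ⟨τ, hτEt, hfb, hfc, hne⟩
  constructor
  · refine ⟨hqOWL, ?_, ?_⟩
    · intro σ hσ
      have h1 := (hbound σ).1
      have h2 := (hbound σ).2
      rw [abs_lt]
      constructor <;> linarith
    · intro σ hσ hslt
      have h1 : rlev σ ≤ rlev ω₀ := hrcomp σ hσ ω₀ hω₀X hslt
      have h0 : pertLev C rlev η A ω₀ = rlev ω₀ + η := hqtop ω₀ hω₀X hω₀c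
      by_cases hup : (σ ∈ C.X ∧ σ.card = n + 1) ∨ σ ∈ A
      · have e : pertLev C rlev η A σ = rlev σ + η := by
          simp only [pertLev]; rw [if_pos hup]
        rcases lt_or_eq_of_le h1 with h | h
        · exact Or.inl (by rw [e, h0]; linarith)
        · exact Or.inr ⟨by rw [e, h0, h], hslt⟩
      · have e : pertLev C rlev η A σ = rlev σ - η := by
          simp only [pertLev]; rw [if_neg hup]
        exact Or.inl (by rw [e, h0]; linarith)
  · rintro ⟨τ, hpp, hkv⟩
    rw [persPair_unique hqOWL hpp hqpair] at hkv
    have h := hinv (some ω₀) (kv_symm hkv)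
    exact hτt₄ (kv_symm h.1)

end StableVol
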